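/- Let (Ω, F, P) be a probability space with a filtration (F_t)_{t≥0}, let p₁, …, p_k be random variables with values in (0,1], let H₀ ⊆ {1,…,k}, and fix α ∈ (0,1). For each t ≤ k, let α_t and λ_t be F_{t−1}-measurable random variables with values in (0,1), define R_t = 𝟙{p_t ≤ α_t}, and assume R_t and 𝟙{p_t ≤ λ_t} are F_t-measurable. Assume that for every j ∈ H₀ and every F_{j−1}-measurable random variable a with values in [0,1], P(p_j ≤ a | F_{j−1}) ≤ a almost surely, and that almost surely Σ_{j≤t} α_j·𝟙{p_j > λ_j}/(1 − λ_j) ≤ α·Σ_{j≤t} R_j for all t ≤ k. Then for every t ≤ k with E[Σ_{j≤t} R_j] > 0, mFDR(t) := E[Σ_{j≤t, j∈H₀} R_j] / E[Σ_{j≤t} R_j] ≤ α. -/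

import Mathlib

open MeasureTheory ProbabilityTheory Real

lemma saffron_integral_le {Ω : Type*} {F : MeasurableSpace Ω} (P : Measure Ω)
    [IsProbabilityMeasure P] {m : MeasurableSpace Ω} (hm : m ≤ F)
    {f a : Ω → ℝ} (hf : Integrable f P) (ha : Integrable a P)
    (h : ∀ᵐ ω ∂P, (P[f | m]) ω ≤ a ω) :
    ∫ ω, f ω ∂P ≤ ∫ ω, a ω ∂P := by
  calc ∫ ω, f ω ∂P = ∫ ω, (P[f | m]) ω ∂P := (integral_condExp hm).symm
    _ ≤ ∫ ω, a ω ∂P := integral_mono_ae integrable_condExp ha h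

lemma saffron_aux {Ω : Type*} {F : MeasurableSpace Ω} (P : Measure Ω)
    [IsProbabilityMeasure P] {m : MeasurableSpace Ω} (hm : m ≤ F)
    (p af lam : Ω → ℝ) (hp : Measurable[F] p)
    (haf : Measurable[m] af) (hlam : Measurable[m] lam)
    (haf_r : ∀ ω, af ω ∈ Set.Ioo (0:ℝ) 1) (hlam_r : ∀ ω, lam ω ∈ Set.Ioo (0:ℝ) 1)
    (hsu : ∀ b : Ω → ℝ, Measurable[m] b → (∀ ω, b ω ∈ Set.Icc (0:ℝ) 1) →
      ∀ᵐ ω ∂P, (P[Set.indicator {ω' | p ω' ≤ b ω'} (fun _ => (1:ℝ)) | m]) ω ≤ b ω)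
    (hT_int : Integrable (fun ω => af ω * (if lam ω < p ω then (1:ℝ) else 0) / (1 - lam ω)) P) :
    ∫ ω, (if p ω ≤ af ω then (1:ℝ) else 0) ∂P ≤
      ∫ ω, af ω * (if lam ω < p ω then (1:ℝ) else 0) / (1 - lam ω) ∂P := by
  have hafm : Measurable[F] af := haf.mono hm le_rfl
  have hlamm : Measurable[F] lam := hlam.mono hm le_rfl
  have hafr' : ∀ ω, af ω ∈ Set.Icc (0:ℝ) 1 :=
    fun ω => ⟨(haf_r ω).1.le, (haf_r ω).2.le⟩
  have hlamr' : ∀ ω, lam ω ∈ Set.Icc (0:ℝ) 1 :=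
    fun ω => ⟨(hlam_r ω).1.le, (hlam_r ω).2.le⟩
  have haf_int : Integrable af P := by
    refine Integrable.mono' ((integrable_const (1:ℝ) : Integrable _ P)) hafm.aestronglyMeasurable ?_
    filter_upwards with ω
    rw [Real.norm_eq_abs, abs_of_nonneg (hafr' ω).1]; exact (hafr' ω).2
  -- indicator functions
  have hRind : (fun ω => if p ω ≤ af ω then (1:ℝ) else 0)
      = Set.indicator {ω' | p ω' ≤ af ω'} (fun _ => (1:ℝ)) := by
    funext ω; simp [Set.indicator_apply, Set.mem_setOf_eq]
  have hCind : (fun ω => if p ω ≤ lam ω then (1:ℝ) else 0)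
      = Set.indicator {ω' | p ω' ≤ lam ω'} (fun _ => (1:ℝ)) := by
    funext ω; simp [Set.indicator_apply, Set.mem_setOf_eq]
  have hR_meas : Measurable[F] (fun ω => if p ω ≤ af ω then (1:ℝ) else 0) :=
    Measurable.ite (measurableSet_le hp hafm) measurable_const measurable_const
  have hC_meas : Measurable[F] (fun ω => if p ω ≤ lam ω then (1:ℝ) else 0) :=
    Measurable.ite (measurableSet_le hp hlamm) measurable_const measurable_const
  have hind_bd : ∀ (f : Ω → ℝ), Measurable[F] f → (∀ ω, f ω = 0 ∨ f ω = 1) → Integrable f P := by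
    intro f hf hb
    refine Integrable.mono' ((integrable_const (1:ℝ) : Integrable _ P)) hf.aestronglyMeasurable ?_
    filter_upwards with ω
    rcases hb ω with h | h <;> simp [h]
  have hR_int : Integrable (fun ω => if p ω ≤ af ω then (1:ℝ) else 0) P :=
    hind_bd _ hR_meas (fun ω => by by_cases h : p ω ≤ af ω <;> simp [h])
  have hC_int : Integrable (fun ω => if p ω ≤ lam ω then (1:ℝ) else 0) P :=
    hind_bd _ hC_meas (fun ω => by by_cases h : p ω ≤ lam ω <;> simp [h])
  have hH_int : Integrable (fun ω => if lam ω < p ω then (1:ℝ) else 0) P := by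
    refine hind_bd _ ?_ (fun ω => by by_cases h : lam ω < p ω <;> simp [h])
    exact Measurable.ite (measurableSet_lt hlamm hp) measurable_const measurable_const
  -- step 1 : ∫ R ≤ ∫ af
  have step1 : ∫ ω, (if p ω ≤ af ω then (1:ℝ) else 0) ∂P ≤ ∫ ω, af ω ∂P := by
    refine saffron_integral_le P hm hR_int haf_int ?_
    have := hsu af haf hafr'
    rw [hRind]
    exact this
  -- step 2 : ∫ af ≤ ∫ T
  -- g := af / (1 - lam),  h := 1{lam < p}
  have hg_meas : Measurable[m] (fun ω => af ω / (1 - lam ω)) :=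
    haf.div (measurable_const.sub hlam)
  have hTg : (fun ω => af ω * (if lam ω < p ω then (1:ℝ) else 0) / (1 - lam ω))
      = (fun ω => af ω / (1 - lam ω)) * (fun ω => if lam ω < p ω then (1:ℝ) else 0) := by
    funext ω
    simp only [Pi.mul_apply]
    ring
  -- condexp of the indicator of {lam < p} dominates 1 - lam
  have hcond_ge : ∀ᵐ ω ∂P, 1 - lam ω ≤ (P[(fun ω => if lam ω < p ω then (1:ℝ) else 0) | m]) ω := by
    have hCle := hsu lam hlam hlamr'
    have hsub : (fun ω => if lam ω < p ω then (1:ℝ) else 0)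
        = (fun _ => (1:ℝ)) - (fun ω => if p ω ≤ lam ω then (1:ℝ) else 0) := by
      funext ω
      by_cases h : p ω ≤ lam ω
      · simp [h, not_lt.2 h]
      · simp [h, not_le.1 h]
    have hce : P[(fun ω => if lam ω < p ω then (1:ℝ) else 0) | m]
        =ᵐ[P] (fun _ => (1:ℝ)) - P[(fun ω => if p ω ≤ lam ω then (1:ℝ) else 0) | m] := by
      rw [hsub]
      refine (condExp_sub (integrable_const 1) hC_int m).trans ?_
      rw [condExp_const hm]
    filter_upwards [hce, hCle] with ω h1 h2
    rw [← hCind] at h2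
    rw [h1, Pi.sub_apply]
    linarith [h2]
  have hTq_int : Integrable ((fun ω => af ω / (1 - lam ω)) * (fun ω => if lam ω < p ω then (1:ℝ) else 0)) P := by
    rw [← hTg]; exact hT_int
  have hmul := condExp_mul_of_stronglyMeasurable_left (μ := P) (m := m)
      (hg_meas.stronglyMeasurable) hTq_int hH_int
  have step2 : ∫ ω, af ω ∂P ≤
      ∫ ω, af ω * (if lam ω < p ω then (1:ℝ) else 0) / (1 - lam ω) ∂P := by
    have hmono : ∀ᵐ ω ∂P, af ω ≤
        ((fun ω => af ω / (1 - lam ω)) * P[(fun ω => if lam ω < p ω then (1:ℝ) else 0) | m]) ω := by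
      filter_upwards [hcond_ge] with ω h
      have h1 : (0:ℝ) < 1 - lam ω := by linarith [(hlam_r ω).2]
      have hg0 : (0:ℝ) ≤ af ω / (1 - lam ω) := div_nonneg (haf_r ω).1.le h1.le
      calc af ω = af ω / (1 - lam ω) * (1 - lam ω) := by field_simp
        _ ≤ _ := by
            simp only [Pi.mul_apply]
            exact mul_le_mul_of_nonneg_left h hg0
    have hint2 : Integrable ((fun ω => af ω / (1 - lam ω)) * P[(fun ω => if lam ω < p ω then (1:ℝ) else 0) | m]) P :=
      (integrable_condExp).congr hmul
    calc ∫ ω, af ω ∂P ≤ ∫ ω, ((fun ω => af ω / (1 - lam ω)) * P[(fun ω => if lam ω < p ω then (1:ℝ) else 0) | m]) ω ∂P :=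
          integral_mono_ae haf_int hint2 hmono
      _ = ∫ ω, (P[(fun ω => af ω / (1 - lam ω)) * (fun ω => if lam ω < p ω then (1:ℝ) else 0) | m]) ω ∂P :=
          (integral_congr_ae hmul).symm
      _ = ∫ ω, ((fun ω => af ω / (1 - lam ω)) * (fun ω => if lam ω < p ω then (1:ℝ) else 0)) ω ∂P :=
          integral_condExp hm
      _ = ∫ ω, af ω * (if lam ω < p ω then (1:ℝ) else 0) / (1 - lam ω) ∂P := by rw [← hTg]
  exact step1.trans step2

theorem saffron_mFDR_control {Ω : Type*} {F : MeasurableSpace Ω} (P : Measure Ω)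
    [IsProbabilityMeasure P] (ℱ : Filtration ℕ F) (k : ℕ) (hk : 1 ≤ k)
    (p : ℕ → Ω → ℝ) (hp_meas : ∀ j, Measurable (p j))
    (hp_range : ∀ j ω, p j ω ∈ Set.Ioc (0 : ℝ) 1)
    (H₀ : Finset ℕ) (hH₀ : H₀ ⊆ Finset.Icc 1 k)
    (α : ℝ) (hα : α ∈ Set.Ioo (0 : ℝ) 1)
    (αf lamf : ℕ → Ω → ℝ)
    (hαf_meas : ∀ j, Measurable[ℱ (j - 1)] (αf j))
    (hlamf_meas : ∀ j, Measurable[ℱ (j - 1)] (lamf j))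
    (hαf_range : ∀ j ω, αf j ω ∈ Set.Ioo (0 : ℝ) 1)
    (hlamf_range : ∀ j ω, lamf j ω ∈ Set.Ioo (0 : ℝ) 1)
    -- `R_j = 𝟙{p_j ≤ α_j}` and `𝟙{p_j ≤ λ_j}` are `F_j`-measurable
    (hR_meas : ∀ j, MeasurableSet[ℱ j] {ω | p j ω ≤ αf j ω})
    (hC_meas : ∀ j, MeasurableSet[ℱ j] {ω | p j ω ≤ lamf j ω})
    -- conditional super-uniformity of the null p-values
    (h_su : ∀ j ∈ H₀, ∀ a : Ω → ℝ, Measurable[ℱ (j - 1)] a →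
      (∀ ω, a ω ∈ Set.Icc (0 : ℝ) 1) →
      ∀ᵐ ω ∂P, (P[Set.indicator {ω' | p j ω' ≤ a ω'} (fun _ => (1 : ℝ)) | ℱ (j - 1)]) ω ≤ a ω)
    -- the SAFFRON estimate of the FDP is controlled at level α, almost surely, at all times
    (h_fdp : ∀ᵐ ω ∂P, ∀ t ≤ k,
      ∑ j ∈ Finset.Icc 1 t,
          αf j ω * (if lamf j ω < p j ω then (1 : ℝ) else 0) / (1 - lamf j ω) ≤
        α * ∑ j ∈ Finset.Icc 1 t, (if p j ω ≤ αf j ω then (1 : ℝ) else 0)) :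
    ∀ t ≤ k,
      0 < ∫⁻ ω, ENNReal.ofReal
          (∑ j ∈ Finset.Icc 1 t, (if p j ω ≤ αf j ω then (1 : ℝ) else 0)) ∂P →
      (∫⁻ ω, ENNReal.ofReal
          (∑ j ∈ (Finset.Icc 1 t).filter (· ∈ H₀),
            (if p j ω ≤ αf j ω then (1 : ℝ) else 0)) ∂P) /
        (∫⁻ ω, ENNReal.ofReal
          (∑ j ∈ Finset.Icc 1 t, (if p j ω ≤ αf j ω then (1 : ℝ) else 0)) ∂P) ≤
      ENNReal.ofReal α := by
  intro t ht _hpos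
  classical
  have hle : ∀ j : ℕ, (ℱ (j - 1) : MeasurableSpace Ω) ≤ F := fun j => ℱ.le _
  have hR_m : ∀ j, Measurable[F] (fun ω => if p j ω ≤ αf j ω then (1:ℝ) else 0) := fun j =>
    Measurable.ite (ℱ.le j {ω | p j ω ≤ αf j ω} (hR_meas j)) measurable_const measurable_const
  have hαm : ∀ j, Measurable[F] (αf j) := fun j => (hαf_meas j).mono (hle j) le_rfl
  have hlm : ∀ j, Measurable[F] (lamf j) := fun j => (hlamf_meas j).mono (hle j) le_rfl
  have hT_m : ∀ j, Measurable[F]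
      (fun ω => αf j ω * (if lamf j ω < p j ω then (1:ℝ) else 0) / (1 - lamf j ω)) := fun j => by
    refine Measurable.div ?_ (measurable_const.sub (hlm j))
    exact (hαm j).mul
      (Measurable.ite (measurableSet_lt (hlm j) (hp_meas j)) measurable_const measurable_const)
  have hR_nn : ∀ j ω, (0:ℝ) ≤ (if p j ω ≤ αf j ω then (1:ℝ) else 0) := fun j ω => by
    by_cases h : p j ω ≤ αf j ω <;> simp [h]
  have hR_le1 : ∀ j ω, (if p j ω ≤ αf j ω then (1:ℝ) else 0) ≤ 1 := fun j ω => by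
    by_cases h : p j ω ≤ αf j ω <;> simp [h]
  have hR_int : ∀ j, Integrable (fun ω => if p j ω ≤ αf j ω then (1:ℝ) else 0) P := fun j => by
    refine Integrable.mono' ((integrable_const (1:ℝ)) : Integrable _ P)
      (hR_m j).aestronglyMeasurable ?_
    filter_upwards with ω
    rw [Real.norm_eq_abs, abs_of_nonneg (hR_nn j ω)]
    exact hR_le1 j ω
  have hT_nn : ∀ j ω,
      (0:ℝ) ≤ αf j ω * (if lamf j ω < p j ω then (1:ℝ) else 0) / (1 - lamf j ω) := by
    intro j ω
    have h1 : (0:ℝ) ≤ 1 - lamf j ω := by linarith [(hlamf_range j ω).2]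
    have h2 : (0:ℝ) ≤ (if lamf j ω < p j ω then (1:ℝ) else 0) := by
      by_cases h : lamf j ω < p j ω <;> simp [h]
    exact div_nonneg (mul_nonneg (hαf_range j ω).1.le h2) h1
  -- sum of rejections is at most t
  have hSle : ∀ ω, ∑ j ∈ Finset.Icc 1 t, (if p j ω ≤ αf j ω then (1:ℝ) else 0) ≤ t := by
    intro ω
    calc ∑ j ∈ Finset.Icc 1 t, (if p j ω ≤ αf j ω then (1:ℝ) else 0)
        ≤ ∑ _j ∈ Finset.Icc 1 t, (1:ℝ) := Finset.sum_le_sum (fun j _ => hR_le1 j ω)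
      _ = (t:ℝ) := by simp [Nat.card_Icc]
  -- each T_j is a.e. bounded, hence integrable, for j ≤ t
  have hT_int : ∀ j ∈ Finset.Icc 1 t,
      Integrable (fun ω => αf j ω * (if lamf j ω < p j ω then (1:ℝ) else 0) / (1 - lamf j ω)) P := by
    intro j hj
    refine Integrable.mono' ((integrable_const (α * t)) : Integrable _ P)
      (hT_m j).aestronglyMeasurable ?_
    filter_upwards [h_fdp] with ω hω
    rw [Real.norm_eq_abs, abs_of_nonneg (hT_nn j ω)]
    calc αf j ω * (if lamf j ω < p j ω then (1:ℝ) else 0) / (1 - lamf j ω)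
        ≤ ∑ i ∈ Finset.Icc 1 t,
            αf i ω * (if lamf i ω < p i ω then (1:ℝ) else 0) / (1 - lamf i ω) :=
          Finset.single_le_sum (fun i _ => hT_nn i ω) hj
      _ ≤ α * ∑ i ∈ Finset.Icc 1 t, (if p i ω ≤ αf i ω then (1:ℝ) else 0) := hω t ht
      _ ≤ α * t := mul_le_mul_of_nonneg_left (hSle ω) hα.1.le
  -- per-hypothesis bound for nulls
  have hkey : ∀ j ∈ (Finset.Icc 1 t).filter (· ∈ H₀),
      ∫ ω, (if p j ω ≤ αf j ω then (1:ℝ) else 0) ∂P ≤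
      ∫ ω, αf j ω * (if lamf j ω < p j ω then (1:ℝ) else 0) / (1 - lamf j ω) ∂P := by
    intro j hj
    rw [Finset.mem_filter] at hj
    exact saffron_aux P (hle j) (p j) (αf j) (lamf j) (hp_meas j) (hαf_meas j) (hlamf_meas j)
      (hαf_range j) (hlamf_range j) (fun b hb hbr => h_su j hj.2 b hb hbr) (hT_int j hj.1)
  have hN_int : Integrable
      (fun ω => ∑ j ∈ (Finset.Icc 1 t).filter (· ∈ H₀),
        (if p j ω ≤ αf j ω then (1:ℝ) else 0)) P :=
    integrable_finset_sum _ (fun j _ => hR_int j)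
  have hS_int : Integrable
      (fun ω => ∑ j ∈ Finset.Icc 1 t, (if p j ω ≤ αf j ω then (1:ℝ) else 0)) P :=
    integrable_finset_sum _ (fun j _ => hR_int j)
  have hA_int : Integrable
      (fun ω => ∑ j ∈ Finset.Icc 1 t,
        αf j ω * (if lamf j ω < p j ω then (1:ℝ) else 0) / (1 - lamf j ω)) P :=
    integrable_finset_sum _ hT_int
  -- main expectation inequality
  have key : ∫ ω, (∑ j ∈ (Finset.Icc 1 t).filter (· ∈ H₀),
        (if p j ω ≤ αf j ω then (1:ℝ) else 0)) ∂P ≤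
      α * ∫ ω, (∑ j ∈ Finset.Icc 1 t, (if p j ω ≤ αf j ω then (1:ℝ) else 0)) ∂P := by
    calc ∫ ω, (∑ j ∈ (Finset.Icc 1 t).filter (· ∈ H₀),
          (if p j ω ≤ αf j ω then (1:ℝ) else 0)) ∂P
        = ∑ j ∈ (Finset.Icc 1 t).filter (· ∈ H₀),
            ∫ ω, (if p j ω ≤ αf j ω then (1:ℝ) else 0) ∂P :=
          integral_finset_sum _ (fun j _ => hR_int j)
      _ ≤ ∑ j ∈ (Finset.Icc 1 t).filter (· ∈ H₀),
            ∫ ω, αf j ω * (if lamf j ω < p j ω then (1:ℝ) else 0) / (1 - lamf j ω) ∂P :=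
          Finset.sum_le_sum hkey
      _ ≤ ∑ j ∈ Finset.Icc 1 t,
            ∫ ω, αf j ω * (if lamf j ω < p j ω then (1:ℝ) else 0) / (1 - lamf j ω) ∂P := by
          refine Finset.sum_le_sum_of_subset_of_nonneg (Finset.filter_subset _ _) ?_
          intro j _ _
          exact integral_nonneg (hT_nn j)
      _ = ∫ ω, (∑ j ∈ Finset.Icc 1 t,
            αf j ω * (if lamf j ω < p j ω then (1:ℝ) else 0) / (1 - lamf j ω)) ∂P :=
          (integral_finset_sum _ hT_int).symm
      _ ≤ ∫ ω, α * (∑ j ∈ Finset.Icc 1 t, (if p j ω ≤ αf j ω then (1:ℝ) else 0)) ∂P := by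
          refine integral_mono_ae hA_int (hS_int.const_mul α) ?_
          filter_upwards [h_fdp] with ω hω
          exact hω t ht
      _ = α * ∫ ω, (∑ j ∈ Finset.Icc 1 t, (if p j ω ≤ αf j ω then (1:ℝ) else 0)) ∂P :=
          integral_const_mul α _
  -- pass to ENNReal
  have eN : ENNReal.ofReal (∫ ω, (∑ j ∈ (Finset.Icc 1 t).filter (· ∈ H₀),
        (if p j ω ≤ αf j ω then (1:ℝ) else 0)) ∂P)
      = ∫⁻ ω, ENNReal.ofReal (∑ j ∈ (Finset.Icc 1 t).filter (· ∈ H₀),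
        (if p j ω ≤ αf j ω then (1:ℝ) else 0)) ∂P :=
    ofReal_integral_eq_lintegral_ofReal hN_int
      (Filter.Eventually.of_forall fun ω => Finset.sum_nonneg (fun j _ => hR_nn j ω))
  have eS : ENNReal.ofReal (∫ ω, (∑ j ∈ Finset.Icc 1 t,
        (if p j ω ≤ αf j ω then (1:ℝ) else 0)) ∂P)
      = ∫⁻ ω, ENNReal.ofReal (∑ j ∈ Finset.Icc 1 t,
        (if p j ω ≤ αf j ω then (1:ℝ) else 0)) ∂P :=
    ofReal_integral_eq_lintegral_ofReal hS_int
      (Filter.Eventually.of_forall fun ω => Finset.sum_nonneg (fun j _ => hR_nn j ω))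
  rw [← eN, ← eS]
  refine ENNReal.div_le_of_le_mul ?_
  calc ENNReal.ofReal (∫ ω, (∑ j ∈ (Finset.Icc 1 t).filter (· ∈ H₀),
        (if p j ω ≤ αf j ω then (1:ℝ) else 0)) ∂P)
      ≤ ENNReal.ofReal (α * ∫ ω, (∑ j ∈ Finset.Icc 1 t,
        (if p j ω ≤ αf j ω then (1:ℝ) else 0)) ∂P) := ENNReal.ofReal_le_ofReal key
    _ = ENNReal.ofReal α * ENNReal.ofReal (∫ ω, (∑ j ∈ Finset.Icc 1 t,
        (if p j ω ≤ αf j ω then (1:ℝ) else 0)) ∂P) := ENNReal.ofReal_mul hα.1.le
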